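/- With ψ(s) = −1/20 + (2/5)e^{−3s} − (9/10)e^{−2s} + (1/2)e^{−s}, one has 5·∫₀^∞ ψ(x)·e^{−x}·(1 + log x − x·log x) dx = log 3 − (11/8)·log 2 (which is log(3/2^{11/8})), where the integrand arises from the Weibull alternative density g(x,θ) = (1+θ)x^θ e^{−x^{1+θ}} via h(x) = ∂g/∂θ(x,0) = e^{−x}(1 + log x − x·log x). -/

import Mathlib

open Real MeasureTheory Set Filter

/-- The projection `ψ` from the paper. -/
noncomputable def psi (s : ℝ) : ℝ :=
  -1/20 + (2/5) * exp (-(3*s)) - (9/10) * exp (-(2*s)) + (1/2) * exp (-s)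

/- ### Auxiliary lemmas -/

lemma gamma_deriv_aux (s : ℝ) (hs : 0 < s) (J : ℝ)
    (hJ : (∫ t in Ioi (0:ℝ), (t:ℂ) ^ ((s:ℂ) - 1) * (Real.log t * Real.exp (-t))) = (J:ℂ)) :
    HasDerivAt Real.Gamma J s := by
  have h1 := Complex.hasDerivAt_GammaIntegral (s := (s:ℂ)) (by simpa using hs)
  rw [hJ] at h1
  have h2 : HasDerivAt (fun x : ℝ => (Complex.GammaIntegral x).re) J s := by
    simpa using h1.real_of_complex
  refine h2.congr_of_eventuallyEq ?_
  filter_upwards [eventually_gt_nhds hs] with x hx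
  rw [← Complex.Gamma_eq_integral (by simpa using hx), Complex.Gamma_ofReal, Complex.ofReal_re]

lemma log_exp_integral :
    (∫ t in Ioi (0:ℝ), Real.log t * Real.exp (-t)) = -Real.eulerMascheroniConstant := by
  refine HasDerivAt.unique (gamma_deriv_aux 1 one_pos _ ?_)
    (by exact_mod_cast Real.hasDerivAt_Gamma_one)
  calc ∫ t in Ioi (0:ℝ), (t:ℂ) ^ (((1:ℝ):ℂ) - 1) * (Real.log t * Real.exp (-t))
      = ∫ t in Ioi (0:ℝ), ((Real.log t * Real.exp (-t) : ℝ) : ℂ) := by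
        refine setIntegral_congr_fun measurableSet_Ioi fun t ht => ?_
        simp
    _ = _ := integral_ofReal

lemma xlog_exp_integral :
    (∫ t in Ioi (0:ℝ), t * (Real.log t * Real.exp (-t))) = 1 - Real.eulerMascheroniConstant := by
  have h2 : HasDerivAt Real.Gamma (-Real.eulerMascheroniConstant + 1) 2 := by
    have := Real.hasDerivAt_Gamma_nat 1
    norm_num [harmonic_succ] at this
    convert this using 1
  have h3 : HasDerivAt Real.Gamma (∫ t in Ioi (0:ℝ), t * (Real.log t * Real.exp (-t))) 2 := by
    refine gamma_deriv_aux 2 two_pos _ ?_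
    calc ∫ t in Ioi (0:ℝ), (t:ℂ) ^ (((2:ℝ):ℂ) - 1) * (Real.log t * Real.exp (-t))
        = ∫ t in Ioi (0:ℝ), ((t * (Real.log t * Real.exp (-t)) : ℝ) : ℂ) := by
          refine setIntegral_congr_fun measurableSet_Ioi fun t ht => ?_
          push_cast
          rw [show (2:ℂ) - 1 = 1 by norm_num, Complex.cpow_one]
      _ = _ := integral_ofReal
  have := h3.unique h2
  linarith

lemma mellin_logexp (s : ℂ) (hs : 0 < s.re) :
    IntegrableOn (fun t : ℝ => (t:ℂ) ^ (s - 1) • (Real.log t • (Real.exp (-t) : ℂ))) (Ioi 0) := by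
  refine (mellin_hasDerivAt_of_isBigO_rpow (E := ℂ) (f := fun x => (Real.exp (-x) : ℂ)) ?_ ?_
    (lt_add_one _) ?_ hs).1
  · refine (Continuous.continuousOn ?_).locallyIntegrableOn measurableSet_Ioi
    exact Complex.continuous_ofReal.comp (Real.continuous_exp.comp continuous_neg)
  · rw [← Asymptotics.isBigO_norm_left]
    simp_rw [Complex.norm_real,
      Asymptotics.isBigO_norm_left]
    simpa only [neg_one_mul] using (isLittleO_exp_neg_mul_rpow_atTop zero_lt_one _).isBigO
  · simp_rw [neg_zero, rpow_zero]
    refine Asymptotics.isBigO_const_of_tendsto (?_ : Tendsto _ _ (nhds (1 : ℂ))) one_ne_zero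
    rw [(by simp : (1 : ℂ) = Real.exp (-0))]
    exact (Complex.continuous_ofReal.comp
      (Real.continuous_exp.comp continuous_neg)).continuousWithinAt

lemma B1int : IntegrableOn (fun t : ℝ => Real.exp (-t)) (Ioi 0) := by
  simpa using exp_neg_integrableOn_Ioi 0 one_pos

lemma B2int : IntegrableOn (fun t : ℝ => Real.log t * Real.exp (-t)) (Ioi 0) := by
  have h := mellin_logexp 1 (by norm_num)
  have h2 : IntegrableOn (fun t : ℝ => ((Real.log t * Real.exp (-t) : ℝ) : ℂ)) (Ioi 0) := by
    refine h.congr_fun (fun t ht => ?_) measurableSet_Ioi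
    simp
  simpa only [IntegrableOn, RCLike.re_to_complex, Complex.ofReal_re] using h2.re

lemma B3int : IntegrableOn (fun t : ℝ => t * Real.exp (-t)) (Ioi 0) := by
  have h := Real.GammaIntegral_convergent (by norm_num : (0:ℝ) < 2)
  refine h.congr_fun (fun t ht => ?_) measurableSet_Ioi
  dsimp only
  rw [show (2:ℝ) - 1 = 1 by norm_num, Real.rpow_one]
  ring

lemma B4int : IntegrableOn (fun t : ℝ => t * (Real.log t * Real.exp (-t))) (Ioi 0) := by
  have h := mellin_logexp 2 (by norm_num)
  have h2 : IntegrableOn (fun t : ℝ => ((t * (Real.log t * Real.exp (-t)) : ℝ) : ℂ)) (Ioi 0) := by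
    refine h.congr_fun (fun t ht => ?_) measurableSet_Ioi
    push_cast
    rw [show (2:ℂ) - 1 = 1 by norm_num, Complex.cpow_one]
    simp [smul_eq_mul]
  simpa only [IntegrableOn, RCLike.re_to_complex, Complex.ofReal_re] using h2.re

lemma B3val : (∫ t in Ioi (0:ℝ), t * Real.exp (-t)) = 1 := by
  have h := Real.Gamma_eq_integral (by norm_num : (0:ℝ) < 2)
  rw [Real.Gamma_two] at h
  refine Eq.trans ?_ h.symm
  exact setIntegral_congr_fun measurableSet_Ioi fun t ht => by
    rw [show (2:ℝ) - 1 = 1 by norm_num, Real.rpow_one]; ring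

noncomputable def base (c₁ c₂ c₃ c₄ : ℝ) (y : ℝ) : ℝ :=
  c₁ * Real.exp (-y) + c₂ * (Real.log y * Real.exp (-y)) + c₃ * (y * Real.exp (-y))
    + c₄ * (y * (Real.log y * Real.exp (-y)))

lemma base_int (c₁ c₂ c₃ c₄ : ℝ) : IntegrableOn (base c₁ c₂ c₃ c₄) (Ioi 0) :=
  (((B1int.const_mul c₁).add (B2int.const_mul c₂)).add (B3int.const_mul c₃)).add
    (B4int.const_mul c₄)

lemma base_val (c₁ c₂ c₃ c₄ : ℝ) :
    ∫ y in Ioi (0:ℝ), base c₁ c₂ c₃ c₄ y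
      = c₁ + c₂ * (-Real.eulerMascheroniConstant) + c₃
        + c₄ * (1 - Real.eulerMascheroniConstant) := by
  unfold base
  have i1 : IntegrableOn (fun y : ℝ => c₁ * Real.exp (-y)) (Ioi 0) := B1int.const_mul c₁
  have i2 : IntegrableOn (fun y : ℝ => c₂ * (Real.log y * Real.exp (-y))) (Ioi 0) :=
    B2int.const_mul c₂
  have i3 : IntegrableOn (fun y : ℝ => c₃ * (y * Real.exp (-y))) (Ioi 0) := B3int.const_mul c₃
  have i4 : IntegrableOn (fun y : ℝ => c₄ * (y * (Real.log y * Real.exp (-y)))) (Ioi 0) :=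
    B4int.const_mul c₄
  have i12 : IntegrableOn (fun y : ℝ => c₁ * Real.exp (-y) + c₂ * (Real.log y * Real.exp (-y)))
      (Ioi 0) := i1.add i2
  have i123 : IntegrableOn (fun y : ℝ => c₁ * Real.exp (-y) + c₂ * (Real.log y * Real.exp (-y))
      + c₃ * (y * Real.exp (-y))) (Ioi 0) := i12.add i3
  rw [integral_add i123 i4, integral_add i12 i3, integral_add i1 i2,
    integral_const_mul, integral_const_mul, integral_const_mul, integral_const_mul,
    integral_exp_neg_Ioi_zero, log_exp_integral, B3val, xlog_exp_integral]
  ring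

lemma key_eqon (a : ℝ) (ha : 0 < a) :
    EqOn (fun x : ℝ => Real.exp (-(a*x)) * (1 + Real.log x - x * Real.log x))
      (fun x => base (1 - Real.log a) 1 (Real.log a / a) (-1/a) (a*x)) (Ioi 0) := by
  intro x hx
  have hx0 : (0:ℝ) < x := hx
  simp only [base]
  rw [Real.log_mul ha.ne' hx0.ne']
  field_simp
  ring

lemma hH_int {a : ℝ} (ha : 0 < a) :
    IntegrableOn (fun x : ℝ => Real.exp (-(a*x)) * (1 + Real.log x - x * Real.log x)) (Ioi 0) := by
  refine IntegrableOn.congr_fun ?_ (key_eqon a ha).symm measurableSet_Ioi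
  have := (integrableOn_Ioi_comp_mul_left_iff
    (base (1 - Real.log a) 1 (Real.log a / a) (-1/a)) 0 ha).2
  simpa [mul_zero] using this (by simpa using base_int _ _ _ _)

lemma hH_val {a : ℝ} (ha : 0 < a) :
    (∫ x in Ioi (0:ℝ), Real.exp (-(a*x)) * (1 + Real.log x - x * Real.log x))
      = (1 - Real.eulerMascheroniConstant - Real.log a) * (a - 1) / a^2 := by
  rw [setIntegral_congr_fun measurableSet_Ioi (key_eqon a ha),
    integral_comp_mul_left_Ioi (base _ _ _ _) 0 ha, mul_zero, base_val, smul_eq_mul]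
  field_simp
  ring

/-- `5·∫₀^∞ ψ(x)·e^{−x}·(1 + log x − x·log x) dx = log 3 − (11/8)·log 2`,
where `h(x) = e^{−x}(1 + log x − x log x)` is the θ-derivative at `θ = 0` of the
Weibull density. -/
theorem stmt_10 :
    5 * (∫ x in Ioi (0:ℝ), psi x * (exp (-x) * (1 + log x - x * log x))) =
      log 3 - (11/8) * log 2 := by
  have hfun : (fun x : ℝ => psi x * (exp (-x) * (1 + log x - x * log x)))
      = fun x : ℝ => (-1/20) * (exp (-(1*x)) * (1 + log x - x * log x))
        + (2/5) * (exp (-(4*x)) * (1 + log x - x * log x))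
        + (-9/10) * (exp (-(3*x)) * (1 + log x - x * log x))
        + (1/2) * (exp (-(2*x)) * (1 + log x - x * log x)) := by
    funext x
    have e2 : exp (-(2*x)) = exp (-x) * exp (-x) := by
      rw [← Real.exp_add]; ring_nf
    have e3 : exp (-(3*x)) = exp (-x) * exp (-x) * exp (-x) := by
      rw [← Real.exp_add, ← Real.exp_add]; ring_nf
    have e4 : exp (-(4*x)) = exp (-x) * exp (-x) * exp (-x) * exp (-x) := by
      rw [← Real.exp_add, ← Real.exp_add, ← Real.exp_add]; ring_nf
    have e1 : exp (-(1*x)) = exp (-x) := by norm_num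
    rw [psi, e1, e2, e3, e4]
    ring
  rw [hfun]
  have i1 : IntegrableOn (fun x : ℝ => (-1/20) * (exp (-(1*x)) * (1 + log x - x * log x)))
      (Ioi 0) := (hH_int (by norm_num : (0:ℝ) < 1)).const_mul _
  have i4 : IntegrableOn (fun x : ℝ => (2/5) * (exp (-(4*x)) * (1 + log x - x * log x)))
      (Ioi 0) := (hH_int (by norm_num : (0:ℝ) < 4)).const_mul _
  have i3 : IntegrableOn (fun x : ℝ => (-9/10) * (exp (-(3*x)) * (1 + log x - x * log x)))
      (Ioi 0) := (hH_int (by norm_num : (0:ℝ) < 3)).const_mul _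
  have i2 : IntegrableOn (fun x : ℝ => (1/2) * (exp (-(2*x)) * (1 + log x - x * log x)))
      (Ioi 0) := (hH_int (by norm_num : (0:ℝ) < 2)).const_mul _
  have i14 : IntegrableOn (fun x : ℝ => (-1/20) * (exp (-(1*x)) * (1 + log x - x * log x))
      + (2/5) * (exp (-(4*x)) * (1 + log x - x * log x))) (Ioi 0) := i1.add i4
  have i143 : IntegrableOn (fun x : ℝ => (-1/20) * (exp (-(1*x)) * (1 + log x - x * log x))
      + (2/5) * (exp (-(4*x)) * (1 + log x - x * log x))
      + (-9/10) * (exp (-(3*x)) * (1 + log x - x * log x))) (Ioi 0) := i14.add i3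
  rw [integral_add i143 i2, integral_add i14 i3, integral_add i1 i4,
    integral_const_mul, integral_const_mul, integral_const_mul, integral_const_mul,
    hH_val (by norm_num : (0:ℝ) < 1), hH_val (by norm_num : (0:ℝ) < 2),
    hH_val (by norm_num : (0:ℝ) < 3), hH_val (by norm_num : (0:ℝ) < 4),
    show (4:ℝ) = 2^2 by norm_num, Real.log_pow]
  push_cast
  ring
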